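/- Let A be the subalgebra of M₅(ℂ) consisting of all matrices of the form [[λ, ν, c, 0, 0],[0, λ, ν, 0, 0],[0, 0, λ, 0, 0],[0, 0, 0, λ, 2ν],[0, 0, 0, 0, λ]] with λ, ν, c ∈ ℂ. Then A is a unital subalgebra of M₅(ℂ), and the linear idempotent map P : A → A which replaces the (1,3) entry c by 0 has range which is not closed under multiplication (indeed not closed under squares), while the kernel of P (the span of the matrix unit E₁₃) is a two-sided ideal of A with square zero. -/

import Mathlib

open Matrix

/-- Let A ⊆ M₅(ℂ) consist of all matrices
λ·I + ν·(E₁₂ + E₂₃ + 2E₄₅) + c·E₁₃.  Then A is a unital subalgebra of M₅(ℂ);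
the idempotent map P replacing the (1,3) entry c by 0 has range
R = {λ·I + ν·N} which is not closed under multiplication (not even under
squares), while its kernel K = ℂ·E₁₃ is a two-sided ideal of A with square
zero. -/
theorem stmt_16
    (N E : Matrix (Fin 5) (Fin 5) ℂ)
    (hN : N = Matrix.single 0 1 1 + Matrix.single 1 2 1 +
      (2 : ℂ) • Matrix.single 3 4 1)
    (hE : E = Matrix.single 0 2 1)
    (S R K : Set (Matrix (Fin 5) (Fin 5) ℂ))
    (hS : S = {M | ∃ l n c : ℂ, M = l • (1 : Matrix (Fin 5) (Fin 5) ℂ) + n • N + c • E})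
    (hR : R = {M | ∃ l n : ℂ, M = l • (1 : Matrix (Fin 5) (Fin 5) ℂ) + n • N})
    (hK : K = {M | ∃ c : ℂ, M = c • E}) :
    (1 : Matrix (Fin 5) (Fin 5) ℂ) ∈ S ∧
    (∀ M ∈ S, ∀ M' ∈ S, M * M' ∈ S) ∧
    (∃ M ∈ R, M * M ∉ R) ∧
    (∀ k ∈ K, ∀ k' ∈ K, k * k' = 0) ∧
    (∀ M ∈ S, ∀ k ∈ K, M * k ∈ K ∧ k * M ∈ K) := by
  have hNN : N * N = E := by
    subst hN hE
    ext i j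
    fin_cases i <;> fin_cases j <;>
      simp [Matrix.mul_apply, Matrix.single, Fin.sum_univ_five]
  have hNE : N * E = 0 := by
    subst hN hE
    ext i j
    fin_cases i <;> fin_cases j <;>
      simp [Matrix.mul_apply, Matrix.single, Fin.sum_univ_five]
  have hEN : E * N = 0 := by
    subst hN hE
    ext i j
    fin_cases i <;> fin_cases j <;>
      simp [Matrix.mul_apply, Matrix.single, Fin.sum_univ_five]
  have hEE : E * E = 0 := by
    subst hE
    ext i j
    fin_cases i <;> fin_cases j <;>
      simp [Matrix.mul_apply, Matrix.single, Fin.sum_univ_five]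
  have key : ∀ l1 n1 c1 l2 n2 c2 : ℂ,
      (l1 • (1 : Matrix (Fin 5) (Fin 5) ℂ) + n1 • N + c1 • E) *
        (l2 • (1 : Matrix (Fin 5) (Fin 5) ℂ) + n2 • N + c2 • E) =
      (l1 * l2) • (1 : Matrix (Fin 5) (Fin 5) ℂ) + (l1 * n2 + n1 * l2) • N +
        (l1 * c2 + c1 * l2 + n1 * n2) • E := by
    intro l1 n1 c1 l2 n2 c2
    simp only [add_mul, mul_add, Matrix.smul_mul, Matrix.mul_smul, hNN, hNE, hEN, hEE,
      smul_zero, one_mul, mul_one, smul_smul, add_smul]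
    module
  refine ⟨?_, ?_, ?_, ?_, ?_⟩
  · rw [hS]
    exact ⟨1, 0, 0, by simp⟩
  · rintro M hM M' hM'
    rw [hS] at hM hM' ⊢
    obtain ⟨l1, n1, c1, rfl⟩ := hM
    obtain ⟨l2, n2, c2, rfl⟩ := hM'
    exact ⟨l1 * l2, l1 * n2 + n1 * l2, l1 * c2 + c1 * l2 + n1 * n2, key ..⟩
  · refine ⟨N, ?_, ?_⟩
    · rw [hR]; exact ⟨0, 1, by simp⟩
    · rw [hNN, hR]
      rintro ⟨l, n, h⟩
      have h02 := congrFun (congrFun h 0) 2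
      rw [hE, hN] at h02
      simp [Matrix.single, Matrix.one_apply] at h02
  · rintro k hk k' hk'
    rw [hK] at hk hk'
    obtain ⟨c, rfl⟩ := hk
    obtain ⟨c', rfl⟩ := hk'
    simp [Matrix.smul_mul, Matrix.mul_smul, hEE]
  · rintro M hM k hk
    rw [hS] at hM
    rw [hK] at hk ⊢
    obtain ⟨l, n, c, rfl⟩ := hM
    obtain ⟨d, rfl⟩ := hk
    constructor
    · refine ⟨l * d, ?_⟩
      simp only [add_mul, Matrix.smul_mul, Matrix.mul_smul, hNE, hEE, smul_zero, one_mul,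
        smul_smul]
      module
    · refine ⟨l * d, ?_⟩
      simp only [mul_add, Matrix.smul_mul, Matrix.mul_smul, hEN, hEE, smul_zero, mul_one,
        smul_smul]
      module
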